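/- arXiv:2508.05566 — 7 statements merged into one kernel-verified Lean document; each statement's English description precedes it below -/
import Mathlib

section
/- Let (E, P, ϑ) be a complete bipolar metric space and let F : E ∪ P → E ∪ P be a covariant polynomial contraction (i.e., F(E) ⊆ E, F(P) ⊆ P, and there exist π ∈ (0,1), σ ≥ 1, and maps q_υ : E × P → [0,∞) for υ = 0,…,σ such that Σ_{υ=0}^{σ} q_υ(Fe, Ff)·ϑ(Fe, Ff)^υ ≤ π·Σ_{υ=0}^{σ} q_υ(e, f)·ϑ(e, f)^υ for all e ∈ E, f ∈ P). If F is continuous and there exist ϱ ∈ {1,…,σ} and Q_ϱ > 0 with q_ϱ(e, f) ≥ Q_ϱ for all e ∈ E, f ∈ P, then F has a unique fixed point in E ∩ P, and for every g₀ ∈ E the Picard sequence g_{κ+1} = F g_κ converges to this fixed point. -/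
open Filter Topology MeasureTheory

/-- A bipolar metric space on a carrier type `α`: two poles `E`, `P` and a
distance `d` defined (meaningfully) on `E × P`. -/
structure BipolarMS (α : Type*) where
  E : Set α
  P : Set α
  hE : E.Nonempty
  hP : P.Nonempty
  d : α → α → ℝ
  nonneg : ∀ e ∈ E, ∀ f ∈ P, 0 ≤ d e f
  eq_iff : ∀ e ∈ E ∩ P, ∀ f ∈ E ∩ P, (d e f = 0 ↔ e = f)
  symm : ∀ e ∈ E ∩ P, ∀ f ∈ E ∩ P, d e f = d f e
  tri : ∀ e ∈ E, ∀ r ∈ E, ∀ z ∈ P, ∀ f ∈ P, d e f ≤ d e z + d r z + d r f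

namespace BipolarMS

variable {α : Type*}

/-- Completeness: every Cauchy bisequence biconverges to a common point of `E ∩ P`. -/
def IsComplete (B : BipolarMS α) : Prop :=
  ∀ g h : ℕ → α, (∀ n, g n ∈ B.E) → (∀ n, h n ∈ B.P) →
    Tendsto (fun p : ℕ × ℕ => B.d (g p.1) (h p.2)) atTop (𝓝 0) →
    ∃ x ∈ B.E ∩ B.P,
      Tendsto (fun n => B.d (g n) x) atTop (𝓝 0) ∧
      Tendsto (fun n => B.d x (h n)) atTop (𝓝 0)

/-- A covariant map preserves the poles. -/
def Covariant (B : BipolarMS α) (F : α → α) : Prop :=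
  (∀ e ∈ B.E, F e ∈ B.E) ∧ (∀ f ∈ B.P, F f ∈ B.P)

/-- A contravariant map swaps the poles. -/
def Contravariant (B : BipolarMS α) (F : α → α) : Prop :=
  (∀ e ∈ B.E, F e ∈ B.P) ∧ (∀ f ∈ B.P, F f ∈ B.E)

/-- Sequential continuity of a covariant map. -/
def SeqContinuous (B : BipolarMS α) (F : α → α) : Prop :=
  ∀ g h : ℕ → α, (∀ n, g n ∈ B.E) → (∀ n, h n ∈ B.P) →
    Tendsto (fun n => B.d (g n) (h n)) atTop (𝓝 0) →
    Tendsto (fun n => B.d (F (g n)) (F (h n))) atTop (𝓝 0)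

/-- Sequential continuity of a contravariant map. -/
def ContraSeqContinuous (B : BipolarMS α) (F : α → α) : Prop :=
  ∀ g h : ℕ → α, (∀ n, g n ∈ B.E) → (∀ n, h n ∈ B.P) →
    Tendsto (fun n => B.d (g n) (h n)) atTop (𝓝 0) →
    Tendsto (fun n => B.d (F (h n)) (F (g n))) atTop (𝓝 0)

/-- Picard-continuity. -/
def PicardContinuous (B : BipolarMS α) (F : α → α) : Prop :=
  ∀ g ∈ B.E, ∀ h ∈ B.P,
    Tendsto (fun κ => B.d (F^[κ] g) h) atTop (𝓝 0) →
    Tendsto (fun κ => B.d (F (F^[κ] g)) (F h)) atTop (𝓝 0)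

/-- Polynomial contraction condition for a covariant map. -/
def IsPolyContraction (B : BipolarMS α) (F : α → α) (π : ℝ) (σ : ℕ)
    (q : ℕ → α → α → ℝ) : Prop :=
  ∀ e ∈ B.E, ∀ f ∈ B.P,
    ∑ υ ∈ Finset.range (σ + 1), q υ (F e) (F f) * B.d (F e) (F f) ^ υ ≤
      π * ∑ υ ∈ Finset.range (σ + 1), q υ e f * B.d e f ^ υ

/-- Polynomial contraction condition for a contravariant map
(`F f ∈ E`, `F e ∈ P`). -/
def IsContraPolyContraction (B : BipolarMS α) (F : α → α) (π : ℝ) (σ : ℕ)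
    (q : ℕ → α → α → ℝ) : Prop :=
  ∀ e ∈ B.E, ∀ f ∈ B.P,
    ∑ υ ∈ Finset.range (σ + 1), q υ (F f) (F e) * B.d (F f) (F e) ^ υ ≤
      π * ∑ υ ∈ Finset.range (σ + 1), q υ e f * B.d e f ^ υ

/-- Almost polynomial contraction condition for a covariant map. -/
def IsAlmostPolyContraction (B : BipolarMS α) (F : α → α) (π : ℝ) (σ : ℕ)
    (q : ℕ → α → α → ℝ) (H : ℕ → ℝ) : Prop :=
  ∀ e ∈ B.E, ∀ f ∈ B.P,
    ∑ υ ∈ Finset.range (σ + 1), q υ (F e) (F f) * B.d (F e) (F f) ^ υ ≤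
      π * ∑ υ ∈ Finset.range (σ + 1),
        q υ e f * (B.d e f ^ υ + H υ * B.d (F e) f ^ υ)

end BipolarMS

set_option maxHeartbeats 2000000 in
/-- covariant polynomial contraction fixed point theorem. -/
theorem covariant_polyContraction_fixedPoint {α : Type*} (B : BipolarMS α)
    (F : α → α) (hcov : B.Covariant F) (π : ℝ) (hπ : π ∈ Set.Ioo (0:ℝ) 1)
    (σ : ℕ) (hσ : 1 ≤ σ) (q : ℕ → α → α → ℝ)
    (hq : ∀ υ, ∀ e ∈ B.E, ∀ f ∈ B.P, 0 ≤ q υ e f)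
    (hPC : B.IsPolyContraction F π σ q)
    (hcomp : B.IsComplete) (hcont : B.SeqContinuous F)
    (ϱ : ℕ) (hϱ1 : 1 ≤ ϱ) (hϱσ : ϱ ≤ σ) (Q : ℝ) (hQ : 0 < Q)
    (hlb : ∀ e ∈ B.E, ∀ f ∈ B.P, Q ≤ q ϱ e f) :
    (∃! x, x ∈ B.E ∩ B.P ∧ F x = x) ∧
      ∀ x, (x ∈ B.E ∩ B.P ∧ F x = x) →
        ∀ g₀ ∈ B.E, Filter.Tendsto (fun κ => B.d (F^[κ] g₀) x)
          Filter.atTop (nhds 0) := by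
  obtain ⟨hπ0, hπ1⟩ := hπ
  obtain ⟨hFE, hFP⟩ := hcov
  have hϱne : ϱ ≠ 0 := by omega
  set S : α → α → ℝ := fun e f => ∑ υ ∈ Finset.range (σ + 1), q υ e f * B.d e f ^ υ with hSdef
  have Snn : ∀ e ∈ B.E, ∀ f ∈ B.P, 0 ≤ S e f := by
    intro e he f hf
    exact Finset.sum_nonneg fun υ _ =>
      mul_nonneg (hq υ e he f hf) (pow_nonneg (B.nonneg e he f hf) υ)
  have Slb : ∀ e ∈ B.E, ∀ f ∈ B.P, Q * B.d e f ^ ϱ ≤ S e f := by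
    intro e he f hf
    have h1 : Q * B.d e f ^ ϱ ≤ q ϱ e f * B.d e f ^ ϱ :=
      mul_le_mul_of_nonneg_right (hlb e he f hf) (pow_nonneg (B.nonneg e he f hf) ϱ)
    refine h1.trans ?_
    exact Finset.single_le_sum
      (fun υ _ => mul_nonneg (hq υ e he f hf) (pow_nonneg (B.nonneg e he f hf) υ))
      (Finset.mem_range.2 (by omega))
  have iterE : ∀ (e : α), e ∈ B.E → ∀ n, F^[n] e ∈ B.E := by
    intro e he n
    induction n with
    | zero => simpa using he
    | succ n ih => rw [Function.iterate_succ_apply']; exact hFE _ ih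
  have iterP : ∀ (f : α), f ∈ B.P → ∀ n, F^[n] f ∈ B.P := by
    intro f hf n
    induction n with
    | zero => simpa using hf
    | succ n ih => rw [Function.iterate_succ_apply']; exact hFP _ ih
  have Siter : ∀ e ∈ B.E, ∀ f ∈ B.P, ∀ n, S (F^[n] e) (F^[n] f) ≤ π ^ n * S e f := by
    intro e he f hf n
    induction n with
    | zero => simp
    | succ n ih =>
      rw [Function.iterate_succ_apply', Function.iterate_succ_apply']
      have h1 : S (F (F^[n] e)) (F (F^[n] f)) ≤ π * S (F^[n] e) (F^[n] f) :=
        hPC _ (iterE e he n) _ (iterP f hf n)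
      calc S (F (F^[n] e)) (F (F^[n] f)) ≤ π * S (F^[n] e) (F^[n] f) := h1
        _ ≤ π * (π ^ n * S e f) := mul_le_mul_of_nonneg_left ih hπ0.le
        _ = π ^ (n + 1) * S e f := by ring
  set r : ℝ := π ^ ((ϱ : ℝ)⁻¹) with hrdef
  have hr0 : 0 < r := Real.rpow_pos_of_pos hπ0 _
  have hr1 : r < 1 := Real.rpow_lt_one hπ0.le hπ1 (by positivity)
  set M : α → α → ℝ := fun e f => (S e f / Q) ^ ((ϱ : ℝ)⁻¹) with hMdef
  have Mnn : ∀ e ∈ B.E, ∀ f ∈ B.P, 0 ≤ M e f := by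
    intro e he f hf
    exact Real.rpow_nonneg (div_nonneg (Snn e he f hf) hQ.le) _
  have key : ∀ e ∈ B.E, ∀ f ∈ B.P, ∀ n, B.d (F^[n] e) (F^[n] f) ≤ M e f * r ^ n := by
    intro e he f hf n
    have hd0 : 0 ≤ B.d (F^[n] e) (F^[n] f) := B.nonneg _ (iterE e he n) _ (iterP f hf n)
    have h1 : Q * B.d (F^[n] e) (F^[n] f) ^ ϱ ≤ π ^ n * S e f :=
      (Slb _ (iterE e he n) _ (iterP f hf n)).trans (Siter e he f hf n)
    have h2 : B.d (F^[n] e) (F^[n] f) ^ ϱ ≤ π ^ n * (S e f / Q) := by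
      rw [mul_div_assoc'] at *
      rw [le_div_iff₀ hQ]
      linarith [h1]
    calc B.d (F^[n] e) (F^[n] f)
        = (B.d (F^[n] e) (F^[n] f) ^ ϱ) ^ ((ϱ : ℝ)⁻¹) :=
          (Real.pow_rpow_inv_natCast hd0 hϱne).symm
      _ ≤ (π ^ n * (S e f / Q)) ^ ((ϱ : ℝ)⁻¹) :=
          Real.rpow_le_rpow (pow_nonneg hd0 _) h2 (by positivity)
      _ = (π ^ n) ^ ((ϱ : ℝ)⁻¹) * (S e f / Q) ^ ((ϱ : ℝ)⁻¹) :=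
          Real.mul_rpow (pow_nonneg hπ0.le _) (div_nonneg (Snn e he f hf) hQ.le)
      _ = M e f * r ^ n := by
          rw [← Real.rpow_natCast π n, ← Real.rpow_mul hπ0.le,
            mul_comm ((n : ℝ)) ((ϱ : ℝ)⁻¹), Real.rpow_mul hπ0.le, Real.rpow_natCast]
          ring
  obtain ⟨g0, hg0⟩ := B.hE
  obtain ⟨h0, hh0⟩ := B.hP
  set g : ℕ → α := fun n => F^[n] g0 with hgdef
  set h : ℕ → α := fun n => F^[n] h0 with hhdef
  have hgE : ∀ n, g n ∈ B.E := fun n => iterE g0 hg0 n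
  have hhP : ∀ n, h n ∈ B.P := fun n => iterP h0 hh0 n
  have ha : ∀ n, B.d (g n) (h n) ≤ M g0 h0 * r ^ n := fun n => key g0 hg0 h0 hh0 n
  have hb : ∀ n, B.d (g (n + 1)) (h n) ≤ M (F g0) h0 * r ^ n := by
    intro n
    have h1 := key (F g0) (hFE _ hg0) h0 hh0 n
    rwa [← Function.iterate_succ_apply] at h1
  have hc : ∀ n, B.d (g n) (h (n + 1)) ≤ M g0 (F h0) * r ^ n := by
    intro n
    have h1 := key g0 hg0 (F h0) (hFP _ hh0) n
    rwa [← Function.iterate_succ_apply] at h1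
  have hMa : 0 ≤ M g0 h0 := Mnn g0 hg0 h0 hh0
  have hMb : 0 ≤ M (F g0) h0 := Mnn _ (hFE _ hg0) h0 hh0
  have hMc : 0 ≤ M g0 (F h0) := Mnn g0 hg0 _ (hFP _ hh0)
  set K : ℝ := M g0 h0 + M (F g0) h0 + M g0 (F h0) with hKdef
  have hK0 : 0 ≤ K := by positivity
  have h1r : 0 < 1 - r := by linarith
  set C : ℝ := K / (1 - r) with hCdef
  have hC0 : 0 ≤ C := div_nonneg hK0 h1r.le
  have hKC : C * (1 - r) = K := div_mul_cancel₀ K (ne_of_gt h1r)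
  have hKleC : K ≤ C := by
    rw [hCdef, le_div_iff₀ h1r]
    nlinarith
  have claim1 : ∀ j κ, B.d (g κ) (h (κ + j)) ≤ C * r ^ κ := by
    intro j
    induction j with
    | zero =>
      intro κ
      have h1 := ha κ
      have hp : (0:ℝ) ≤ r ^ κ := pow_nonneg hr0.le κ
      have : M g0 h0 * r ^ κ ≤ C * r ^ κ :=
        mul_le_mul_of_nonneg_right (by nlinarith) hp
      simpa using h1.trans this
    | succ j ih =>
      intro κ
      have tri := B.tri (g κ) (hgE κ) (g (κ + 1)) (hgE (κ + 1)) (h κ) (hhP κ)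
        (h (κ + (j + 1))) (hhP _)
      have h3 : B.d (g (κ + 1)) (h (κ + (j + 1))) ≤ C * r ^ (κ + 1) := by
        rw [show κ + (j + 1) = (κ + 1) + j by omega]
        exact ih (κ + 1)
      have hp : (0:ℝ) ≤ r ^ κ := pow_nonneg hr0.le κ
      have hps : r ^ (κ + 1) = r ^ κ * r := pow_succ r κ
      have h4 := ha κ
      have h5 := hb κ
      nlinarith [tri]
  have claim2 : ∀ j l, B.d (g (l + j)) (h l) ≤ C * r ^ l := by
    intro j
    induction j with
    | zero =>
      intro l
      have h1 := ha l
      have hp : (0:ℝ) ≤ r ^ l := pow_nonneg hr0.le l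
      have : M g0 h0 * r ^ l ≤ C * r ^ l :=
        mul_le_mul_of_nonneg_right (by nlinarith) hp
      simpa using h1.trans this
    | succ j ih =>
      intro l
      have tri := B.tri (g (l + (j + 1))) (hgE _) (g l) (hgE l) (h (l + 1)) (hhP _)
        (h l) (hhP l)
      have h3 : B.d (g (l + (j + 1))) (h (l + 1)) ≤ C * r ^ (l + 1) := by
        rw [show l + (j + 1) = (l + 1) + j by omega]
        exact ih (l + 1)
      have hp : (0:ℝ) ≤ r ^ l := pow_nonneg hr0.le l
      have hps : r ^ (l + 1) = r ^ l * r := pow_succ r l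
      have h4 := ha l
      have h5 := hc l
      nlinarith [tri]
  have hbound : ∀ p : ℕ × ℕ, B.d (g p.1) (h p.2) ≤ C * r ^ (min p.1 p.2) := by
    intro p
    rcases le_total p.1 p.2 with hle | hle
    · have h1 := claim1 (p.2 - p.1) p.1
      rw [Nat.add_sub_cancel' hle] at h1
      rwa [min_eq_left hle]
    · have h1 := claim2 (p.1 - p.2) p.2
      rw [Nat.add_sub_cancel' hle] at h1
      rwa [min_eq_right hle]
  have hmin : Tendsto (fun p : ℕ × ℕ => min p.1 p.2) atTop atTop := by
    apply Filter.tendsto_atTop.2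
    intro b
    filter_upwards [Filter.eventually_ge_atTop (b, b)] with p hp
    exact le_min hp.1 hp.2
  have hlim : Tendsto (fun p : ℕ × ℕ => C * r ^ (min p.1 p.2)) atTop (𝓝 0) := by
    have h1 := ((tendsto_pow_atTop_nhds_zero_of_lt_one hr0.le hr1).comp hmin).const_mul C
    simpa using h1
  have hCauchy : Tendsto (fun p : ℕ × ℕ => B.d (g p.1) (h p.2)) atTop (𝓝 0) :=
    squeeze_zero (fun p => B.nonneg _ (hgE _) _ (hhP _)) hbound hlim
  obtain ⟨x, hx, hgx, hxh⟩ := hcomp g h hgE hhP hCauchy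
  have hgx' : Tendsto (fun n => B.d (g (n + 1)) x) atTop (𝓝 0) :=
    hgx.comp (tendsto_add_atTop_nat 1)
  have hFx : Tendsto (fun n => B.d (g (n + 1)) (F x)) atTop (𝓝 0) := by
    have h1 := hcont g (fun _ => x) hgE (fun _ => hx.2) hgx
    have h2 : (fun n => B.d (F (g n)) (F x)) = fun n => B.d (g (n + 1)) (F x) := by
      funext n
      rw [hgdef]
      simp [Function.iterate_succ_apply']
    rwa [h2] at h1
  have hxFx : B.d x (F x) = 0 := by
    have hxx : B.d x x = 0 := (B.eq_iff x hx x hx).2 rfl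
    have hbnd : ∀ n, B.d x (F x) ≤ B.d (g (n + 1)) x + B.d (g (n + 1)) (F x) := by
      intro n
      have tri := B.tri x hx.1 (g (n + 1)) (hgE _) x hx.2 (F x) (hFP x hx.2)
      linarith
    have hlim2 : Tendsto (fun n => B.d (g (n + 1)) x + B.d (g (n + 1)) (F x))
        atTop (𝓝 0) := by
      simpa using hgx'.add hFx
    have h1 : B.d x (F x) ≤ 0 := ge_of_tendsto' hlim2 hbnd
    exact le_antisymm h1 (B.nonneg x hx.1 (F x) (hFP x hx.2))
  have hFxmem : F x ∈ B.E ∩ B.P := ⟨hFE x hx.1, hFP x hx.2⟩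
  have hfix : F x = x := ((B.eq_iff x hx (F x) hFxmem).1 hxFx).symm
  have huniq : ∀ y, y ∈ B.E ∩ B.P ∧ F y = y → ∀ z, z ∈ B.E ∩ B.P ∧ F z = z → y = z := by
    rintro y ⟨hy, hfy⟩ z ⟨hz, hfz⟩
    have h1 : S (F y) (F z) ≤ π * S y z := hPC y hy.1 z hz.2
    rw [hfy, hfz] at h1
    have hS0 : S y z ≤ 0 := by nlinarith [Snn y hy.1 z hz.2]
    have hdnn := B.nonneg y hy.1 z hz.2
    have h2 : Q * B.d y z ^ ϱ ≤ 0 := (Slb y hy.1 z hz.2).trans hS0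
    have h3 : B.d y z ^ ϱ ≤ 0 := le_of_mul_le_mul_left (by rw [mul_zero]; exact h2) hQ
    have hpw : B.d y z ^ ϱ = 0 := le_antisymm h3 (pow_nonneg hdnn ϱ)
    have hd : B.d y z = 0 := pow_eq_zero_iff hϱne |>.1 hpw
    exact (B.eq_iff y hy z hz).1 hd
  refine ⟨⟨x, ⟨hx, hfix⟩, fun y hy => huniq y hy x ⟨hx, hfix⟩⟩, ?_⟩
  rintro z ⟨hz, hfz⟩ e0 he0
  have hbd : ∀ κ, B.d (F^[κ] e0) z ≤ M e0 z * r ^ κ := by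
    intro κ
    have h1 := key e0 he0 z hz.2 κ
    rwa [Function.iterate_fixed hfz κ] at h1
  apply squeeze_zero (fun κ => B.nonneg _ (iterE e0 he0 κ) z hz.2) hbd
  simpa using (tendsto_pow_atTop_nhds_zero_of_lt_one hr0.le hr1).const_mul (M e0 z)
end

section
/- Let (E, P, ϑ) be a complete bipolar metric space and let F : E ∪ P → E ∪ P be a contravariant polynomial contraction (i.e., F(E) ⊆ P, F(P) ⊆ E, and there exist π ∈ (0,1), σ ≥ 1, and maps q_υ : E × P → [0,∞) with Σ_{υ=0}^{σ} q_υ(Ff, Fe)·ϑ(Ff, Fe)^υ ≤ π·Σ_{υ=0}^{σ} q_υ(e, f)·ϑ(e, f)^υ for all e ∈ E, f ∈ P). If F is continuous and there exist ϱ ∈ {1,…,σ} and Q_ϱ > 0 with q_ϱ(e, f) ≥ Q_ϱ for all e ∈ E, f ∈ P, then F has a unique fixed point. -/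
open Filter Topology MeasureTheory

set_option maxHeartbeats 1600000 in
/-- contravariant polynomial contraction fixed point theorem. -/
theorem contravariant_polyContraction_fixedPoint {α : Type*} (B : BipolarMS α)
    (F : α → α) (hcontra : B.Contravariant F) (π : ℝ) (hπ : π ∈ Set.Ioo (0:ℝ) 1)
    (σ : ℕ) (hσ : 1 ≤ σ) (q : ℕ → α → α → ℝ)
    (hq : ∀ υ, ∀ e ∈ B.E, ∀ f ∈ B.P, 0 ≤ q υ e f)
    (hPC : B.IsContraPolyContraction F π σ q)
    (hcomp : B.IsComplete) (hcont : B.ContraSeqContinuous F)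
    (ϱ : ℕ) (hϱ1 : 1 ≤ ϱ) (hϱσ : ϱ ≤ σ) (Q : ℝ) (hQ : 0 < Q)
    (hlb : ∀ e ∈ B.E, ∀ f ∈ B.P, Q ≤ q ϱ e f) :
    ∃! x, x ∈ B.E ∩ B.P ∧ F x = x := by
  
  obtain ⟨e0, he0⟩ := B.hE
  -- Picard sequences
  set g : ℕ → α := fun n => Nat.rec e0 (fun _ x => F (F x)) n with hgdef
  set h : ℕ → α := fun n => F (g n) with hhdef
  have hg0 : g 0 = e0 := rfl
  have hgh : ∀ n, g (n + 1) = F (h n) := fun n => rfl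
  have hgE : ∀ n, g n ∈ B.E := by
    intro n; induction n with
    | zero => exact he0
    | succ n ih => exact hcontra.2 _ (hcontra.1 _ ih)
  have hhP : ∀ n, h n ∈ B.P := fun n => hcontra.1 _ (hgE n)
  -- the polynomial functional
  set S : α → α → ℝ := fun e f =>
    ∑ υ ∈ Finset.range (σ + 1), q υ e f * B.d e f ^ υ with hSdef
  have hScontr : ∀ e ∈ B.E, ∀ f ∈ B.P, S (F f) (F e) ≤ π * S e f := hPC
  have hSnn : ∀ e ∈ B.E, ∀ f ∈ B.P, 0 ≤ S e f := by
    intro e he f hf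
    exact Finset.sum_nonneg fun υ _ =>
      mul_nonneg (hq υ e he f hf) (pow_nonneg (B.nonneg e he f hf) υ)
  have hSlb : ∀ e ∈ B.E, ∀ f ∈ B.P, Q * B.d e f ^ ϱ ≤ S e f := by
    intro e he f hf
    have h1 : q ϱ e f * B.d e f ^ ϱ ≤ S e f :=
      Finset.single_le_sum
        (fun υ _ => mul_nonneg (hq υ e he f hf) (pow_nonneg (B.nonneg e he f hf) υ))
        (Finset.mem_range.mpr (Nat.lt_succ_of_le hϱσ))
    have h2 : Q * B.d e f ^ ϱ ≤ q ϱ e f * B.d e f ^ ϱ :=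
      mul_le_mul_of_nonneg_right (hlb e he f hf) (pow_nonneg (B.nonneg e he f hf) ϱ)
    linarith
  set S0 : ℝ := S (g 0) (h 0) with hS0def
  have hS0nn : 0 ≤ S0 := hSnn _ (hgE 0) _ (hhP 0)
  -- geometric decay of S along the Picard chain
  have keyA : ∀ n, S (g n) (h n) ≤ π ^ (2 * n) * S0 := by
    intro n; induction n with
    | zero => simp [hS0def]
    | succ n ih =>
        have h1 : S (g (n + 1)) (h n) ≤ π * S (g n) (h n) := by
          have := hScontr (g n) (hgE n) (h n) (hhP n)
          rwa [← hgh n] at this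
        have h2 : S (g (n + 1)) (h (n + 1)) ≤ π * S (g (n + 1)) (h n) := by
          have := hScontr (g (n + 1)) (hgE (n + 1)) (h n) (hhP n)
          rwa [← hgh n] at this
        have hπ0 := hπ.1
        calc S (g (n + 1)) (h (n + 1)) ≤ π * (π * S (g n) (h n)) := by
              refine h2.trans (mul_le_mul_of_nonneg_left h1 hπ0.le)
          _ ≤ π * (π * (π ^ (2 * n) * S0)) := by
              refine mul_le_mul_of_nonneg_left
                (mul_le_mul_of_nonneg_left ih hπ0.le) hπ0.le
          _ = π ^ (2 * (n + 1)) * S0 := by ring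
  have keyB : ∀ n, S (g (n + 1)) (h n) ≤ π ^ (2 * n + 1) * S0 := by
    intro n
    have h1 : S (g (n + 1)) (h n) ≤ π * S (g n) (h n) := by
      have := hScontr (g n) (hgE n) (h n) (hhP n)
      rwa [← hgh n] at this
    calc S (g (n + 1)) (h n) ≤ π * (π ^ (2 * n) * S0) :=
          h1.trans (mul_le_mul_of_nonneg_left (keyA n) hπ.1.le)
      _ = π ^ (2 * n + 1) * S0 := by ring
  -- extraction of distance bounds via rpow
  have hϱpos : (0 : ℝ) < (ϱ : ℝ) := by exact_mod_cast Nat.lt_of_lt_of_le Nat.zero_lt_one hϱ1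
  set r : ℝ := π ^ ((ϱ : ℝ)⁻¹) with hrdef
  set C : ℝ := (S0 / Q) ^ ((ϱ : ℝ)⁻¹) with hCdef
  have hr0 : 0 < r := Real.rpow_pos_of_pos hπ.1 _
  have hr1 : r < 1 := Real.rpow_lt_one hπ.1.le hπ.2 (by positivity)
  have hC0 : 0 ≤ C := Real.rpow_nonneg (div_nonneg hS0nn hQ.le) _
  have hd : ∀ e ∈ B.E, ∀ f ∈ B.P, ∀ k : ℕ, S e f ≤ π ^ k * S0 →
      B.d e f ≤ C * r ^ k := by
    intro e he f hf k hk
    have hdnn : 0 ≤ B.d e f := B.nonneg e he f hf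
    have h2 : B.d e f ^ ϱ ≤ π ^ k * S0 / Q := by
      rw [le_div_iff₀ hQ]
      have := hSlb e he f hf
      nlinarith
    have h3 : ((B.d e f ^ ϱ : ℝ)) ^ ((ϱ : ℝ)⁻¹) ≤ (π ^ k * S0 / Q) ^ ((ϱ : ℝ)⁻¹) :=
      Real.rpow_le_rpow (pow_nonneg hdnn _) h2 (by positivity)
    have hL : ((B.d e f ^ ϱ : ℝ)) ^ ((ϱ : ℝ)⁻¹) = B.d e f := by
      rw [← Real.rpow_natCast (B.d e f) ϱ, ← Real.rpow_mul hdnn,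
        mul_inv_cancel₀ (ne_of_gt hϱpos), Real.rpow_one]
    have hR : ((π ^ k * S0 / Q : ℝ)) ^ ((ϱ : ℝ)⁻¹) = C * r ^ k := by
      rw [mul_div_assoc,
        Real.mul_rpow (pow_nonneg hπ.1.le _) (div_nonneg hS0nn hQ.le),
        ← Real.rpow_natCast π k, ← Real.rpow_mul hπ.1.le, mul_comm (k : ℝ),
        Real.rpow_mul hπ.1.le, Real.rpow_natCast, hrdef, hCdef, mul_comm]
    rw [hL, hR] at h3
    exact h3
  have dd1 : ∀ n, B.d (g n) (h n) ≤ C * r ^ (2 * n) :=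
    fun n => hd _ (hgE n) _ (hhP n) _ (keyA n)
  have dd2 : ∀ n, B.d (g (n + 1)) (h n) ≤ C * r ^ (2 * n + 1) :=
    fun n => hd _ (hgE (n + 1)) _ (hhP n) _ (keyB n)
  -- Cauchy estimates
  have h1r : (0 : ℝ) < 1 - r := by linarith
  have hb1 : ∀ m n, m ≤ n →
      B.d (g m) (h n) * (1 - r) ≤ C * (r ^ (2 * m) - r ^ (2 * n + 1)) := by
    intro m n hmn
    induction n, hmn using Nat.le_induction with
    | base =>
        have := dd1 m
        have e1 : r ^ (2 * m + 1) = r ^ (2 * m) * r := by ring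
        nlinarith [pow_nonneg hr0.le (2 * m)]
    | succ n hmn ih =>
        have htri := B.tri (g m) (hgE m) (g (n + 1)) (hgE (n + 1))
          (h n) (hhP n) (h (n + 1)) (hhP (n + 1))
        have hA' : B.d (g (n + 1)) (h n) * (1 - r) ≤ C * r ^ (2 * n + 1) * (1 - r) :=
          mul_le_mul_of_nonneg_right (dd2 n) h1r.le
        have hB' : B.d (g (n + 1)) (h (n + 1)) * (1 - r) ≤ C * r ^ (2 * (n + 1)) * (1 - r) :=
          mul_le_mul_of_nonneg_right (dd1 (n + 1)) h1r.le
        calc B.d (g m) (h (n + 1)) * (1 - r)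
            ≤ (B.d (g m) (h n) + B.d (g (n + 1)) (h n) + B.d (g (n + 1)) (h (n + 1))) *
                (1 - r) := mul_le_mul_of_nonneg_right htri h1r.le
          _ = B.d (g m) (h n) * (1 - r) + B.d (g (n + 1)) (h n) * (1 - r) +
                B.d (g (n + 1)) (h (n + 1)) * (1 - r) := by ring
          _ ≤ C * (r ^ (2 * m) - r ^ (2 * n + 1)) + C * r ^ (2 * n + 1) * (1 - r) +
                C * r ^ (2 * (n + 1)) * (1 - r) := add_le_add (add_le_add ih hA') hB'
          _ = C * (r ^ (2 * m) - r ^ (2 * (n + 1) + 1)) := by ring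
  have hb2 : ∀ n m, n ≤ m →
      B.d (g m) (h n) * (1 - r) ≤
        C * (2 * r ^ (2 * n) - r ^ (2 * m) - r ^ (2 * m + 1)) := by
    intro n m hnm
    induction m, hnm using Nat.le_induction with
    | base =>
        have := dd1 n
        have e1 : r ^ (2 * n + 1) = r ^ (2 * n) * r := by ring
        nlinarith [pow_nonneg hr0.le (2 * n)]
    | succ m hnm ih =>
        have htri := B.tri (g (m + 1)) (hgE (m + 1)) (g m) (hgE m)
          (h m) (hhP m) (h n) (hhP n)
        have hA' : B.d (g (m + 1)) (h m) * (1 - r) ≤ C * r ^ (2 * m + 1) * (1 - r) :=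
          mul_le_mul_of_nonneg_right (dd2 m) h1r.le
        have hB' : B.d (g m) (h m) * (1 - r) ≤ C * r ^ (2 * m) * (1 - r) :=
          mul_le_mul_of_nonneg_right (dd1 m) h1r.le
        have h5 : C * r ^ (2 * m + 3) ≤ C * r ^ (2 * m + 1) :=
          mul_le_mul_of_nonneg_left
            (pow_le_pow_of_le_one hr0.le hr1.le (by omega)) hC0
        calc B.d (g (m + 1)) (h n) * (1 - r)
            ≤ (B.d (g (m + 1)) (h m) + B.d (g m) (h m) + B.d (g m) (h n)) * (1 - r) :=
              mul_le_mul_of_nonneg_right htri h1r.le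
          _ = B.d (g (m + 1)) (h m) * (1 - r) + B.d (g m) (h m) * (1 - r) +
                B.d (g m) (h n) * (1 - r) := by ring
          _ ≤ C * r ^ (2 * m + 1) * (1 - r) + C * r ^ (2 * m) * (1 - r) +
                C * (2 * r ^ (2 * n) - r ^ (2 * m) - r ^ (2 * m + 1)) :=
              add_le_add (add_le_add hA' hB') ih
          _ = C * (2 * r ^ (2 * n) - r ^ (2 * m + 1) - r ^ (2 * m + 2)) := by ring
          _ ≤ C * (2 * r ^ (2 * n) - r ^ (2 * (m + 1)) - r ^ (2 * (m + 1) + 1)) := by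
              have e : r ^ (2 * (m + 1)) = r ^ (2 * m + 2) := by ring
              have e' : r ^ (2 * (m + 1) + 1) = r ^ (2 * m + 3) := by ring
              rw [e, e']
              linarith [h5]
  set K : ℝ := 2 * C / (1 - r) with hKdef
  have hb : ∀ m n, B.d (g m) (h n) ≤ K * r ^ (min m n) := by
    intro m n
    rw [hKdef, div_mul_eq_mul_div, le_div_iff₀ h1r, mul_comm (B.d (g m) (h n))]
    rcases le_total m n with hmn | hnm
    · rw [min_eq_left hmn]
      have h1 := hb1 m n hmn
      have h2 : r ^ (2 * m) ≤ r ^ m := pow_le_pow_of_le_one hr0.le hr1.le (by omega)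
      nlinarith [pow_nonneg hr0.le (2 * n + 1), pow_nonneg hr0.le m]
    · rw [min_eq_right hnm]
      have h1 := hb2 n m hnm
      have h2 : r ^ (2 * n) ≤ r ^ n := pow_le_pow_of_le_one hr0.le hr1.le (by omega)
      nlinarith [pow_nonneg hr0.le (2 * m), pow_nonneg hr0.le (2 * m + 1)]
  have ht : Tendsto (fun k : ℕ => K * r ^ k) atTop (𝓝 0) := by
    have := (tendsto_pow_atTop_nhds_zero_of_lt_one hr0.le hr1).const_mul K
    simpa using this
  have hmin : Tendsto (fun p : ℕ × ℕ => min p.1 p.2) atTop atTop := by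
    refine tendsto_atTop.2 fun b => eventually_atTop.2 ⟨(b, b), fun p hp => ?_⟩
    exact le_min hp.1 hp.2
  have hbig : Tendsto (fun p : ℕ × ℕ => B.d (g p.1) (h p.2)) atTop (𝓝 0) := by
    refine squeeze_zero (fun p => B.nonneg _ (hgE p.1) _ (hhP p.2))
      (fun p => hb p.1 p.2) (ht.comp hmin)
  obtain ⟨x, hx, hgx, hxh⟩ := hcomp g h hgE hhP hbig
  have hFxP : F x ∈ B.P := hcontra.1 x hx.1
  have hFxE : F x ∈ B.E := hcontra.2 x hx.2
  -- F x = x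
  have t1 : Tendsto (fun n => B.d (F x) (h n)) atTop (𝓝 0) :=
    hcont g (fun _ => x) hgE (fun _ => hx.2) hgx
  have t2 : Tendsto (fun n => B.d (g (n + 1)) (h n)) atTop (𝓝 0) := by
    refine squeeze_zero (fun n => B.nonneg _ (hgE (n + 1)) _ (hhP n))
      (fun n => ?_) ht
    have := hb (n + 1) n
    rwa [min_eq_right (Nat.le_succ n)] at this
  have t3 : Tendsto (fun n => B.d (g (n + 1)) x) atTop (𝓝 0) := by
    have := hgx.comp (tendsto_add_atTop_nat 1)
    exact this
  have tsum : Tendsto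
      (fun n => B.d (F x) (h n) + B.d (g (n + 1)) (h n) + B.d (g (n + 1)) x)
      atTop (𝓝 0) := by
    simpa using (t1.add t2).add t3
  have hdle : B.d (F x) x ≤ 0 :=
    ge_of_tendsto' tsum fun n =>
      B.tri (F x) hFxE (g (n + 1)) (hgE (n + 1)) (h n) (hhP n) x hx.2
  have hFx : F x = x :=
    (B.eq_iff (F x) ⟨hFxE, hFxP⟩ x hx).1
      (le_antisymm hdle (B.nonneg _ hFxE _ hx.2))
  refine ⟨x, ⟨hx, hFx⟩, ?_⟩
  rintro y ⟨hy, hFy⟩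
  -- uniqueness
  have hu1 : S y x ≤ π * S x y := by
    have := hScontr x hx.1 y hy.2
    rwa [hFy, hFx] at this
  have hu2 : S x y ≤ π * S y x := by
    have := hScontr y hy.1 x hx.2
    rwa [hFx, hFy] at this
  have hSxy0 : 0 ≤ S x y := hSnn x hx.1 y hy.2
  have hππ : π * π < 1 := by nlinarith [hπ.1, hπ.2]
  have hself : S x y ≤ π * π * S x y := by
    have := mul_le_mul_of_nonneg_left hu1 hπ.1.le
    nlinarith [hu2]
  have hSle : S x y ≤ 0 := by nlinarith [hself, hππ, hSxy0]
  have hdxy : B.d x y = 0 := by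
    have hlb' := hSlb x hx.1 y hy.2
    have hnn := B.nonneg x hx.1 y hy.2
    have h7 : B.d x y ^ ϱ ≤ 0 := by
      have h8 : Q * B.d x y ^ ϱ ≤ Q * 0 := by linarith
      exact le_of_mul_le_mul_left h8 hQ
    have hpow : B.d x y ^ ϱ = 0 := le_antisymm h7 (pow_nonneg hnn ϱ)
    have := pow_eq_zero_iff (n := ϱ) (by omega) |>.1 hpow
    exact this
  have : x = y := (B.eq_iff x hx y hy).1 hdxy
  exact this.symm
end

section
/- Let (E, P, ϑ) be a bipolar metric space and F : E ∪ P → E ∪ P a covariant polynomial contraction with coefficient functions q₀,…,q_σ and constant π ∈ (0,1). Suppose: (i) q₀ ≡ 0; (ii) for each υ ∈ {1,…,σ} there exists W_υ > 0 with q_υ(e, f) ≤ W_υ for all e ∈ E, f ∈ P; (iii) there exist ϱ ∈ {1,…,σ} and Q_ϱ > 0 with q_ϱ(e, f) ≥ Q_ϱ for all e ∈ E, f ∈ P. Then F is continuous, i.e., for any sequences {g_κ} ⊂ E, {h_κ} ⊂ P with ϑ(g_κ, h_κ) → 0, we have ϑ(F g_κ, F h_κ) → 0. -/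
open Filter Topology MeasureTheory

/-- bounded coefficients force continuity of a polynomial contraction. -/
theorem polyContraction_continuous {α : Type*} (B : BipolarMS α)
    (F : α → α) (hcov : B.Covariant F) (π : ℝ) (hπ : π ∈ Set.Ioo (0:ℝ) 1)
    (σ : ℕ) (hσ : 1 ≤ σ) (q : ℕ → α → α → ℝ)
    (hq : ∀ υ, ∀ e ∈ B.E, ∀ f ∈ B.P, 0 ≤ q υ e f)
    (hPC : B.IsPolyContraction F π σ q)
    (hq0 : ∀ e ∈ B.E, ∀ f ∈ B.P, q 0 e f = 0)
    (W : ℕ → ℝ) (hW : ∀ υ, 1 ≤ υ → υ ≤ σ → 0 < W υ)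
    (hub : ∀ υ, 1 ≤ υ → υ ≤ σ → ∀ e ∈ B.E, ∀ f ∈ B.P, q υ e f ≤ W υ)
    (ϱ : ℕ) (hϱ1 : 1 ≤ ϱ) (hϱσ : ϱ ≤ σ) (Q : ℝ) (hQ : 0 < Q)
    (hlb : ∀ e ∈ B.E, ∀ f ∈ B.P, Q ≤ q ϱ e f) :
    B.SeqContinuous F := by
  rintro g h hg hh hd
  obtain ⟨hπ0, hπ1⟩ := hπ
  set D := fun n => B.d (F (g n)) (F (h n)) with hDdef
  have hFg : ∀ n, F (g n) ∈ B.E := fun n => hcov.1 _ (hg n)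
  have hFh : ∀ n, F (h n) ∈ B.P := fun n => hcov.2 _ (hh n)
  have hDnn : ∀ n, 0 ≤ D n := fun n => B.nonneg _ (hFg n) _ (hFh n)
  have hdnn : ∀ n, 0 ≤ B.d (g n) (h n) := fun n => B.nonneg _ (hg n) _ (hh n)
  set c : ℕ → ℝ := fun n =>
    π * ∑ υ ∈ Finset.range (σ + 1),
      (if υ = 0 then 0 else W υ) * B.d (g n) (h n) ^ υ with hcdef
  have key : ∀ n, Q * D n ^ ϱ ≤ c n := by
    intro n
    have h1 : Q * D n ^ ϱ ≤
        ∑ υ ∈ Finset.range (σ + 1), q υ (F (g n)) (F (h n)) * D n ^ υ := by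
      have hs := Finset.single_le_sum
        (f := fun υ => q υ (F (g n)) (F (h n)) * D n ^ υ)
        (fun i _ => mul_nonneg (hq i _ (hFg n) _ (hFh n)) (pow_nonneg (hDnn n) i))
        (Finset.mem_range.mpr (by omega) : ϱ ∈ Finset.range (σ + 1))
      exact le_trans (mul_le_mul_of_nonneg_right (hlb _ (hFg n) _ (hFh n))
        (pow_nonneg (hDnn n) ϱ)) hs
    have h2 := hPC _ (hg n) _ (hh n)
    have h3 : ∑ υ ∈ Finset.range (σ + 1), q υ (g n) (h n) * B.d (g n) (h n) ^ υ ≤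
        ∑ υ ∈ Finset.range (σ + 1),
          (if υ = 0 then 0 else W υ) * B.d (g n) (h n) ^ υ := by
      apply Finset.sum_le_sum
      intro i hi
      rcases Nat.eq_zero_or_pos i with h0 | h0
      · simp [h0, hq0 _ (hg n) _ (hh n)]
      · rw [if_neg h0.ne']
        exact mul_le_mul_of_nonneg_right
          (hub i h0 (Nat.lt_succ_iff.mp (Finset.mem_range.mp hi)) _ (hg n) _ (hh n))
          (pow_nonneg (hdnn n) i)
    calc Q * D n ^ ϱ ≤ _ := h1
      _ ≤ π * ∑ υ ∈ Finset.range (σ + 1), q υ (g n) (h n) * B.d (g n) (h n) ^ υ := h2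
      _ ≤ c n := mul_le_mul_of_nonneg_left h3 hπ0.le
  have hcz : Tendsto c atTop (𝓝 0) := by
    have hsum : Tendsto (fun n => ∑ υ ∈ Finset.range (σ + 1),
        (if υ = 0 then 0 else W υ) * B.d (g n) (h n) ^ υ) atTop (𝓝 0) := by
      have hterm : ∀ i ∈ Finset.range (σ + 1), Tendsto
          (fun n => (if i = 0 then 0 else W i) * B.d (g n) (h n) ^ i)
          atTop (𝓝 0) := by
        intro i _
        rcases Nat.eq_zero_or_pos i with h0 | h0
        · simp [h0]
        · rw [if_neg h0.ne']
          have := (hd.pow i).const_mul (W i)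
          simpa [zero_pow h0.ne'] using this
      have hsum' := tendsto_finset_sum (Finset.range (σ + 1)) hterm
      simpa using hsum'
    have := hsum.const_mul π
    rw [mul_zero] at this
    exact this
  have hQD : Tendsto (fun n => Q * D n ^ ϱ) atTop (𝓝 0) :=
    squeeze_zero (fun n => mul_nonneg hQ.le (pow_nonneg (hDnn n) ϱ)) key hcz
  have hpow : Tendsto (fun n => D n ^ ϱ) atTop (𝓝 0) := by
    have := hQD.const_mul Q⁻¹
    simpa [mul_assoc, inv_mul_cancel_left₀ hQ.ne'] using this
  rw [Metric.tendsto_atTop] at hpow ⊢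
  intro ε hε
  obtain ⟨N, hN⟩ := hpow (ε ^ ϱ) (pow_pos hε ϱ)
  refine ⟨N, fun n hn => ?_⟩
  have hn' := hN n hn
  rw [Real.dist_eq, sub_zero, abs_of_nonneg (pow_nonneg (hDnn n) ϱ)] at hn'
  rw [Real.dist_eq, sub_zero, abs_of_nonneg (hDnn n)]
  by_contra hcon
  push_neg at hcon
  exact absurd hn' (not_lt.mpr (pow_le_pow_left₀ hε.le hcon ϱ))
end

section
/- Let (E, P, ϑ) be a complete bipolar metric space and F : E ∪ P → E ∪ P a covariant map. Suppose there exist π ∈ (0,1), σ ≥ 1, and positive constants q₁,…,q_σ such that Σ_{υ=1}^{σ} q_υ·ϑ(Fe, Ff)^υ ≤ π·Σ_{υ=1}^{σ} q_υ·ϑ(e, f)^υ for all e ∈ E, f ∈ P. Then F has a unique fixed point. -/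
open Filter Topology MeasureTheory

/-- constant-coefficient polynomial contraction fixed point theorem. -/
theorem constCoeff_polyContraction_fixedPoint {α : Type*} (B : BipolarMS α)
    (F : α → α) (hcov : B.Covariant F) (hcomp : B.IsComplete)
    (π : ℝ) (hπ : π ∈ Set.Ioo (0:ℝ) 1) (σ : ℕ) (hσ : 1 ≤ σ)
    (q : ℕ → ℝ) (hq : ∀ υ ∈ Finset.Icc 1 σ, 0 < q υ)
    (hPC : ∀ e ∈ B.E, ∀ f ∈ B.P,
      ∑ υ ∈ Finset.Icc 1 σ, q υ * B.d (F e) (F f) ^ υ ≤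
        π * ∑ υ ∈ Finset.Icc 1 σ, q υ * B.d e f ^ υ) :
    ∃! x, x ∈ B.E ∩ B.P ∧ F x = x := by
  obtain ⟨hπ0, hπ1⟩ := hπ
  obtain ⟨hFE, hFP⟩ := hcov
  obtain ⟨e0, he0⟩ := B.hE
  obtain ⟨f0, hf0⟩ := B.hP
  set S : α → α → ℝ := fun e f => ∑ υ ∈ Finset.Icc 1 σ, q υ * B.d e f ^ υ with hSdef
  have h1mem : (1:ℕ) ∈ Finset.Icc 1 σ := Finset.mem_Icc.2 ⟨le_refl 1, hσ⟩
  have hq1 : 0 < q 1 := hq 1 h1mem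
  set g : ℕ → α := fun n => F^[n] e0 with hgdef
  set h : ℕ → α := fun n => F^[n] f0 with hhdef
  have hg : ∀ n, g n ∈ B.E := by
    intro n; induction n with
    | zero => simpa [hgdef] using he0
    | succ n ih => simpa [hgdef, Function.iterate_succ_apply'] using hFE _ ih
  have hh : ∀ n, h n ∈ B.P := by
    intro n; induction n with
    | zero => simpa [hhdef] using hf0
    | succ n ih => simpa [hhdef, Function.iterate_succ_apply'] using hFP _ ih
  have hgs : ∀ n, g (n + 1) = F (g n) := fun n => Function.iterate_succ_apply' F n e0
  have hhs : ∀ n, h (n + 1) = F (h n) := fun n => Function.iterate_succ_apply' F n f0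
  have hSnn : ∀ e ∈ B.E, ∀ f ∈ B.P, 0 ≤ S e f := by
    intro e he f hf
    apply Finset.sum_nonneg
    intro υ hυ
    exact mul_nonneg (hq υ hυ).le (pow_nonneg (B.nonneg e he f hf) υ)
  have hdleS : ∀ e ∈ B.E, ∀ f ∈ B.P, q 1 * B.d e f ≤ S e f := by
    intro e he f hf
    have := Finset.single_le_sum (f := fun υ => q υ * B.d e f ^ υ)
      (fun υ hυ => mul_nonneg (hq υ hυ).le (pow_nonneg (B.nonneg e he f hf) υ)) h1mem
    simpa using this
  have hcontr : ∀ e ∈ B.E, ∀ f ∈ B.P, S (F e) (F f) ≤ π * S e f := hPC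
  -- iterated contraction bounds
  have hiter1 : ∀ n, S (g n) (h n) ≤ π ^ n * S (g 0) (h 0) := by
    intro n; induction n with
    | zero => simp
    | succ n ih =>
      have h1 : S (g (n+1)) (h (n+1)) ≤ π * S (g n) (h n) := by
        rw [hgs, hhs]; exact hcontr _ (hg n) _ (hh n)
      calc S (g (n+1)) (h (n+1)) ≤ π * S (g n) (h n) := h1
        _ ≤ π * (π ^ n * S (g 0) (h 0)) := by
            exact mul_le_mul_of_nonneg_left ih hπ0.le
        _ = π ^ (n+1) * S (g 0) (h 0) := by ring
  have hiter2 : ∀ n, S (g (n+1)) (h n) ≤ π ^ n * S (g 1) (h 0) := by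
    intro n; induction n with
    | zero => simp
    | succ n ih =>
      have h1 : S (g (n+2)) (h (n+1)) ≤ π * S (g (n+1)) (h n) := by
        rw [show n+2 = (n+1)+1 by ring, hgs, hhs]
        exact hcontr _ (hg (n+1)) _ (hh n)
      calc S (g (n+2)) (h (n+1)) ≤ π * S (g (n+1)) (h n) := h1
        _ ≤ π * (π ^ n * S (g 1) (h 0)) := mul_le_mul_of_nonneg_left ih hπ0.le
        _ = π ^ (n+1) * S (g 1) (h 0) := by ring
  set A : ℝ := max (S (g 0) (h 0)) (S (g 1) (h 0)) / q 1 with hAdef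
  have hA0 : 0 ≤ A := div_nonneg (le_trans (hSnn _ (hg 0) _ (hh 0)) (le_max_left _ _)) hq1.le
  have hAq : max (S (g 0) (h 0)) (S (g 1) (h 0)) = q 1 * A := by
    rw [hAdef, mul_div_assoc', mul_div_cancel_left₀ _ hq1.ne']
  have hD : ∀ n, B.d (g n) (h n) ≤ A * π ^ n := by
    intro n
    have h1 : q 1 * B.d (g n) (h n) ≤ π ^ n * (q 1 * A) := by
      calc q 1 * B.d (g n) (h n) ≤ S (g n) (h n) := hdleS _ (hg n) _ (hh n)
        _ ≤ π ^ n * S (g 0) (h 0) := hiter1 n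
        _ ≤ π ^ n * (q 1 * A) := by
            apply mul_le_mul_of_nonneg_left _ (pow_nonneg hπ0.le n)
            rw [← hAq]; exact le_max_left _ _
    nlinarith [pow_nonneg hπ0.le n]
  have hD' : ∀ n, B.d (g (n+1)) (h n) ≤ A * π ^ n := by
    intro n
    have h1 : q 1 * B.d (g (n+1)) (h n) ≤ π ^ n * (q 1 * A) := by
      calc q 1 * B.d (g (n+1)) (h n) ≤ S (g (n+1)) (h n) := hdleS _ (hg (n+1)) _ (hh n)
        _ ≤ π ^ n * S (g 1) (h 0) := hiter2 n
        _ ≤ π ^ n * (q 1 * A) := by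
            apply mul_le_mul_of_nonneg_left _ (pow_nonneg hπ0.le n)
            rw [← hAq]; exact le_max_right _ _
    nlinarith [pow_nonneg hπ0.le n]
  set C1 : ℝ := 2 * A / (1 - π) with hC1def
  have hπ1' : (0:ℝ) < 1 - π := by linarith
  have hC1eq : C1 * (1 - π) = 2 * A := by rw [hC1def, div_mul_cancel₀ _ hπ1'.ne']
  have hC10 : 0 ≤ C1 := div_nonneg (by linarith) hπ1'.le
  have key1 : ∀ k n, B.d (g n) (h (n + k)) ≤ C1 * π ^ n := by
    intro k
    induction k with
    | zero =>
      intro n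
      have hAC1 : A ≤ C1 := by nlinarith [mul_nonneg hC10 hπ0.le]
      have hp : (0:ℝ) ≤ π ^ n := pow_nonneg hπ0.le n
      calc B.d (g n) (h (n + 0)) = B.d (g n) (h n) := by rw [Nat.add_zero]
        _ ≤ A * π ^ n := hD n
        _ ≤ C1 * π ^ n := mul_le_mul_of_nonneg_right hAC1 hp
    | succ k ih =>
      intro n
      have htri := B.tri (g n) (hg n) (g (n+1)) (hg (n+1)) (h n) (hh n)
        (h (n + (k+1))) (hh (n + (k+1)))
      have hih : B.d (g (n+1)) (h ((n+1) + k)) ≤ C1 * π ^ (n+1) := ih (n+1)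
      rw [show (n+1) + k = n + (k+1) by ring] at hih
      have h1 := hD n
      have h2 := hD' n
      have hp : (0:ℝ) ≤ π ^ n := pow_nonneg hπ0.le n
      have hps : π ^ (n+1) = π ^ n * π := pow_succ π n
      nlinarith
  set C : ℝ := C1 + 2 * A with hCdef
  have hbound : ∀ n m, B.d (g n) (h m) ≤ C * π ^ (min n m) := by
    intro n m
    rcases le_or_gt n m with hnm | hnm
    · have := key1 (m - n) n
      rw [Nat.add_sub_cancel' hnm] at this
      rw [min_eq_left hnm]
      have hp : (0:ℝ) ≤ π ^ n := pow_nonneg hπ0.le n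
      nlinarith
    · have htri := B.tri (g n) (hg n) (g m) (hg m) (h n) (hh n) (h m) (hh m)
      have h1 := hD n
      have h2 := key1 (n - m) m
      rw [Nat.add_sub_cancel' hnm.le] at h2
      have h3 := hD m
      have hple : π ^ n ≤ π ^ m := pow_le_pow_of_le_one hπ0.le hπ1.le hnm.le
      rw [min_eq_right hnm.le]
      have hp : (0:ℝ) ≤ π ^ m := pow_nonneg hπ0.le m
      nlinarith
  have hmin : Tendsto (fun p : ℕ × ℕ => min p.1 p.2) atTop atTop := by
    apply tendsto_atTop.2
    intro b
    filter_upwards [eventually_ge_atTop (b, b)] with p hp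
    exact le_min hp.1 hp.2
  have hub : Tendsto (fun p : ℕ × ℕ => C * π ^ (min p.1 p.2)) atTop (𝓝 0) := by
    have h0 := (tendsto_pow_atTop_nhds_zero_of_lt_one hπ0.le hπ1).comp hmin
    have := h0.const_mul C
    simpa using this
  have hcauchy : Tendsto (fun p : ℕ × ℕ => B.d (g p.1) (h p.2)) atTop (𝓝 0) :=
    squeeze_zero (fun p => B.nonneg _ (hg _) _ (hh _)) (fun p => hbound _ _) hub
  obtain ⟨x, hx, hx1, hx2⟩ := hcomp g h hg hh hcauchy
  have hxE : x ∈ B.E := hx.1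
  have hxP : x ∈ B.P := hx.2
  have hFxE : F x ∈ B.E := hFE x hxE
  have hFxP : F x ∈ B.P := hFP x hxP
  -- S (g n) x → 0
  have hSx : Tendsto (fun n => S (g n) x) atTop (𝓝 0) := by
    have : Tendsto (fun n => ∑ υ ∈ Finset.Icc 1 σ, q υ * B.d (g n) x ^ υ) atTop (𝓝 0) := by
      have hsum : Tendsto (fun n => ∑ υ ∈ Finset.Icc 1 σ, q υ * B.d (g n) x ^ υ) atTop
          (𝓝 (∑ υ ∈ Finset.Icc 1 σ, (0:ℝ))) := by
        apply tendsto_finset_sum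
        intro υ hυ
        have hυ1 : υ ≠ 0 := by
          have := (Finset.mem_Icc.1 hυ).1; omega
        have := (hx1.pow υ).const_mul (q υ)
        simpa [zero_pow hυ1] using this
      simpa using hsum
    exact this
  -- d (g (n+1)) (F x) → 0
  have hdF : Tendsto (fun n => B.d (g (n+1)) (F x)) atTop (𝓝 0) := by
    have hle : ∀ n, B.d (g (n+1)) (F x) ≤ (π / q 1) * S (g n) x := by
      intro n
      have h1 : q 1 * B.d (F (g n)) (F x) ≤ S (F (g n)) (F x) :=
        hdleS _ (hFE _ (hg n)) _ hFxP
      have h2 : S (F (g n)) (F x) ≤ π * S (g n) x := hcontr _ (hg n) _ hxP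
      rw [hgs]
      rw [div_mul_eq_mul_div, le_div_iff₀ hq1]
      nlinarith
    have hub2 : Tendsto (fun n => (π / q 1) * S (g n) x) atTop (𝓝 0) := by
      have := hSx.const_mul (π / q 1)
      simpa using this
    exact squeeze_zero (fun n => B.nonneg _ (hg _) _ hFxP) hle hub2
  have hdx : Tendsto (fun n => B.d (g (n+1)) x) atTop (𝓝 0) :=
    hx1.comp (tendsto_add_atTop_nat 1)
  have hFxx : B.d (F x) x = 0 := by
    have hFF : B.d (F x) (F x) = 0 :=
      (B.eq_iff (F x) ⟨hFxE, hFxP⟩ (F x) ⟨hFxE, hFxP⟩).2 rfl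
    have hle : ∀ n, B.d (F x) x ≤ B.d (g (n+1)) (F x) + B.d (g (n+1)) x := by
      intro n
      have := B.tri (F x) hFxE (g (n+1)) (hg (n+1)) (F x) hFxP x hxP
      linarith [this, hFF]
    have hlim : Tendsto (fun n => B.d (g (n+1)) (F x) + B.d (g (n+1)) x) atTop (𝓝 0) := by
      have := hdF.add hdx
      simpa using this
    have h1 : B.d (F x) x ≤ 0 := ge_of_tendsto' hlim hle
    exact le_antisymm h1 (B.nonneg _ hFxE _ hxP)
  have hfix : F x = x := (B.eq_iff (F x) ⟨hFxE, hFxP⟩ x hx).1 hFxx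
  refine ⟨x, ⟨hx, hfix⟩, ?_⟩
  rintro y ⟨⟨hyE, hyP⟩, hyfix⟩
  have h1 : S (F y) (F x) ≤ π * S y x := hcontr _ hyE _ hxP
  rw [hyfix, hfix] at h1
  have h2 : 0 ≤ S y x := hSnn _ hyE _ hxP
  have h3 : S y x = 0 := by nlinarith
  have h4 : q 1 * B.d y x ≤ 0 := by
    have := hdleS _ hyE _ hxP
    linarith
  have h5 : B.d y x = 0 := by
    have := B.nonneg _ hyE _ hxP
    nlinarith
  exact (B.eq_iff y ⟨hyE, hyP⟩ x hx).1 h5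
end

section
/- Let (E, P, ϑ) be a complete bipolar metric space and F : E ∪ P → E ∪ P a covariant polynomial contraction (with coefficient maps q₀,…,q_σ and π ∈ (0,1)). If F is Picard-continuous and there exist ϱ ∈ {1,…,σ} and Q_ϱ > 0 with q_ϱ(e, f) ≥ Q_ϱ for all e ∈ E, f ∈ P, then F admits a unique fixed point. -/
open Filter Topology MeasureTheory

/-- Picard-continuous polynomial contraction fixed point theorem. -/
theorem picardContinuous_polyContraction_fixedPoint {α : Type*} (B : BipolarMS α)
    (F : α → α) (hcov : B.Covariant F) (π : ℝ) (hπ : π ∈ Set.Ioo (0:ℝ) 1)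
    (σ : ℕ) (hσ : 1 ≤ σ) (q : ℕ → α → α → ℝ)
    (hq : ∀ υ, ∀ e ∈ B.E, ∀ f ∈ B.P, 0 ≤ q υ e f)
    (hPC : B.IsPolyContraction F π σ q)
    (hcomp : B.IsComplete) (hpc : B.PicardContinuous F)
    (ϱ : ℕ) (hϱ1 : 1 ≤ ϱ) (hϱσ : ϱ ≤ σ) (Q : ℝ) (hQ : 0 < Q)
    (hlb : ∀ e ∈ B.E, ∀ f ∈ B.P, Q ≤ q ϱ e f) :
    ∃! x, x ∈ B.E ∩ B.P ∧ F x = x := by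
  obtain ⟨hπ0, hπ1⟩ := hπ
  obtain ⟨hFE, hFP⟩ := hcov
  obtain ⟨e₀, he₀⟩ := B.hE
  obtain ⟨f₀, hf₀⟩ := B.hP
  have hϱ0 : ϱ ≠ 0 := by omega
  set S : α → α → ℝ := fun e f => ∑ υ ∈ Finset.range (σ+1), q υ e f * B.d e f ^ υ with hSdef
  have hϱmem : ϱ ∈ Finset.range (σ+1) := by simp; omega
  have hSnn : ∀ e ∈ B.E, ∀ f ∈ B.P, 0 ≤ S e f := fun e he f hf =>
    Finset.sum_nonneg fun υ _ => mul_nonneg (hq υ e he f hf) (pow_nonneg (B.nonneg e he f hf) υ)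
  have hSlb : ∀ e ∈ B.E, ∀ f ∈ B.P, Q * B.d e f ^ ϱ ≤ S e f := by
    intro e he f hf
    calc Q * B.d e f ^ ϱ ≤ q ϱ e f * B.d e f ^ ϱ :=
          mul_le_mul_of_nonneg_right (hlb e he f hf) (pow_nonneg (B.nonneg e he f hf) ϱ)
      _ ≤ S e f := Finset.single_le_sum
          (fun υ _ => mul_nonneg (hq υ e he f hf) (pow_nonneg (B.nonneg e he f hf) υ)) hϱmem
  have hitE : ∀ e ∈ B.E, ∀ n, F^[n] e ∈ B.E := by
    intro e he n
    induction n with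
    | zero => simpa using he
    | succ n ih => rw [Function.iterate_succ_apply']; exact hFE _ ih
  have hitP : ∀ f ∈ B.P, ∀ n, F^[n] f ∈ B.P := by
    intro f hf n
    induction n with
    | zero => simpa using hf
    | succ n ih => rw [Function.iterate_succ_apply']; exact hFP _ ih
  have hSiter : ∀ e ∈ B.E, ∀ f ∈ B.P, ∀ n, S (F^[n] e) (F^[n] f) ≤ π ^ n * S e f := by
    intro e he f hf n
    induction n with
    | zero => simp
    | succ n ih =>
      rw [Function.iterate_succ_apply', Function.iterate_succ_apply']
      calc S (F (F^[n] e)) (F (F^[n] f)) ≤ π * S (F^[n] e) (F^[n] f) :=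
            hPC _ (hitE e he n) _ (hitP f hf n)
        _ ≤ π * (π ^ n * S e f) := mul_le_mul_of_nonneg_left ih hπ0.le
        _ = π ^ (n+1) * S e f := by ring
  set r : ℝ := π ^ ((ϱ:ℝ)⁻¹) with hrdef
  have hr0 : 0 ≤ r := Real.rpow_nonneg hπ0.le _
  have hr1 : r < 1 := Real.rpow_lt_one hπ0.le hπ1 (by positivity)
  have hrpow : r ^ ϱ = π := Real.rpow_inv_natCast_pow hπ0.le hϱ0
  have key : ∀ e ∈ B.E, ∀ f ∈ B.P, ∀ n,
      B.d (F^[n] e) (F^[n] f) ≤ (S e f / Q) ^ ((ϱ:ℝ)⁻¹) * r ^ n := by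
    intro e he f hf n
    have hSQ : 0 ≤ S e f / Q := div_nonneg (hSnn e he f hf) hQ.le
    have h1 : Q * B.d (F^[n] e) (F^[n] f) ^ ϱ ≤ π ^ n * S e f :=
      le_trans (hSlb _ (hitE e he n) _ (hitP f hf n)) (hSiter e he f hf n)
    have hK : ((S e f / Q) ^ ((ϱ:ℝ)⁻¹)) ^ ϱ = S e f / Q :=
      Real.rpow_inv_natCast_pow hSQ hϱ0
    have h2 : B.d (F^[n] e) (F^[n] f) ^ ϱ ≤ ((S e f / Q) ^ ((ϱ:ℝ)⁻¹) * r ^ n) ^ ϱ := by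
      rw [mul_pow, hK, ← pow_mul, mul_comm n ϱ, pow_mul, hrpow]
      rw [div_mul_eq_mul_div, le_div_iff₀ hQ, mul_comm]
      calc Q * B.d (F^[n] e) (F^[n] f) ^ ϱ ≤ π ^ n * S e f := h1
        _ = S e f * π ^ n := by ring
    exact le_of_pow_le_pow_left₀ hϱ0
      (mul_nonneg (Real.rpow_nonneg hSQ _) (pow_nonneg hr0 n)) h2
  set g : ℕ → α := fun n => F^[n] e₀ with hgdef
  set h : ℕ → α := fun n => F^[n] f₀ with hhdef
  have hgE : ∀ n, g n ∈ B.E := fun n => hitE e₀ he₀ n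
  have hhP : ∀ n, h n ∈ B.P := fun n => hitP f₀ hf₀ n
  set A : ℝ := (S e₀ f₀ / Q) ^ ((ϱ:ℝ)⁻¹) with hAdef
  set A' : ℝ := (S (F e₀) f₀ / Q) ^ ((ϱ:ℝ)⁻¹) with hA'def
  have hA0 : 0 ≤ A := Real.rpow_nonneg (div_nonneg (hSnn e₀ he₀ f₀ hf₀) hQ.le) _
  have hA'0 : 0 ≤ A' := Real.rpow_nonneg (div_nonneg (hSnn _ (hFE e₀ he₀) f₀ hf₀) hQ.le) _
  have ha : ∀ n, B.d (g n) (h n) ≤ A * r ^ n := fun n => key e₀ he₀ f₀ hf₀ n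
  have hb : ∀ n, B.d (g (n+1)) (h n) ≤ A' * r ^ n := by
    intro n
    have : g (n+1) = F^[n] (F e₀) := by
      simp only [hgdef, Function.iterate_succ_apply]
    rw [this]
    exact key (F e₀) (hFE e₀ he₀) f₀ hf₀ n
  have hgeo : ∀ m n : ℕ, ∑ k ∈ Finset.Ico m n, r ^ k ≤ r ^ m * (1 - r)⁻¹ := by
    intro m n
    have hr2 : (0:ℝ) < 1 - r := by linarith
    rcases le_total n m with hnm | hmn
    · rw [Finset.Ico_eq_empty (by omega)]
      simp only [Finset.sum_empty]
      positivity
    · rw [Finset.sum_Ico_eq_sum_range]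
      have : ∀ i ∈ Finset.range (n - m), r ^ (m + i) = r ^ m * r ^ i := fun i _ => pow_add r m i
      rw [Finset.sum_congr rfl this, ← Finset.mul_sum]
      apply mul_le_mul_of_nonneg_left _ (pow_nonneg hr0 m)
      have h2 : ∑ i ∈ Finset.range (n-m), r ^ i = (1 - r ^ (n-m)) / (1 - r) := by
        rw [geom_sum_eq hr1.ne, div_eq_div_iff (by linarith) hr2.ne']; ring
      rw [h2, div_le_iff₀ hr2, inv_mul_cancel₀ hr2.ne']
      have := pow_nonneg hr0 (n-m)
      linarith
  have tele1 : ∀ m n, m ≤ n → B.d (g m) (h n) ≤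
      (∑ k ∈ Finset.Ico m n, (B.d (g k) (h k) + B.d (g (k+1)) (h k))) + B.d (g n) (h n) := by
    intro m n hmn
    induction n, hmn using Nat.le_induction with
    | base => simp
    | succ n hmn ih =>
      have tri := B.tri (g m) (hgE m) (g (n+1)) (hgE (n+1)) (h n) (hhP n) (h (n+1)) (hhP (n+1))
      rw [Finset.sum_Ico_succ_top hmn]
      linarith
  have tele2 : ∀ n m, n ≤ m → B.d (g m) (h n) ≤
      (∑ k ∈ Finset.Ico n m, (B.d (g k) (h k) + B.d (g (k+1)) (h k))) + B.d (g n) (h n) := by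
    intro n m hnm
    induction m, hnm using Nat.le_induction with
    | base => simp
    | succ m hnm ih =>
      have tri := B.tri (g (m+1)) (hgE (m+1)) (g m) (hgE m) (h m) (hhP m) (h n) (hhP n)
      rw [Finset.sum_Ico_succ_top hnm]
      linarith
  set C : ℝ := (A + A') * (1 - r)⁻¹ + A with hCdef
  have hC0 : 0 ≤ C := by
    have hr2 : (0:ℝ) < 1 - r := by linarith
    have h4 : 0 ≤ (1 - r)⁻¹ := by positivity
    have h5 := mul_nonneg (add_nonneg hA0 hA'0) h4
    rw [hCdef]
    linarith
  have hsum : ∀ m n : ℕ, ∑ k ∈ Finset.Ico m n, (B.d (g k) (h k) + B.d (g (k+1)) (h k)) ≤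
      (A + A') * (r ^ m * (1 - r)⁻¹) := by
    intro m n
    calc ∑ k ∈ Finset.Ico m n, (B.d (g k) (h k) + B.d (g (k+1)) (h k))
        ≤ ∑ k ∈ Finset.Ico m n, (A + A') * r ^ k := by
          apply Finset.sum_le_sum
          intro k _
          have := ha k; have := hb k
          have : (A + A') * r ^ k = A * r ^ k + A' * r ^ k := by ring
          rw [this]
          exact add_le_add (ha k) (hb k)
      _ = (A + A') * ∑ k ∈ Finset.Ico m n, r ^ k := by rw [Finset.mul_sum]
      _ ≤ (A + A') * (r ^ m * (1 - r)⁻¹) :=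
          mul_le_mul_of_nonneg_left (hgeo m n) (by linarith)
  have hbound : ∀ m n : ℕ, B.d (g m) (h n) ≤ C * r ^ (min m n) := by
    intro m n
    rcases le_total m n with hmn | hnm
    · rw [min_eq_left hmn]
      have h1 := tele1 m n hmn
      have h2 := hsum m n
      have h3 : B.d (g n) (h n) ≤ A * r ^ m :=
        le_trans (ha n) (mul_le_mul_of_nonneg_left (pow_le_pow_of_le_one hr0 hr1.le hmn) hA0)
      calc B.d (g m) (h n) ≤ (A + A') * (r ^ m * (1 - r)⁻¹) + A * r ^ m := by linarith
        _ = C * r ^ m := by rw [hCdef]; ring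
    · rw [min_eq_right hnm]
      have h1 := tele2 n m hnm
      have h2 := hsum n m
      exact le_trans h1 (by
        have h3 : B.d (g n) (h n) ≤ A * r ^ n := ha n
        calc (∑ k ∈ Finset.Ico n m, (B.d (g k) (h k) + B.d (g (k+1)) (h k))) + B.d (g n) (h n)
            ≤ (A + A') * (r ^ n * (1 - r)⁻¹) + A * r ^ n := by linarith
          _ = C * r ^ n := by rw [hCdef]; ring)
  have hrlim : Tendsto (fun n : ℕ => C * r ^ n) atTop (𝓝 0) := by
    have := tendsto_pow_atTop_nhds_zero_of_lt_one hr0 hr1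
    simpa using this.const_mul C
  have hconv : Tendsto (fun p : ℕ × ℕ => B.d (g p.1) (h p.2)) atTop (𝓝 0) := by
    have hmin : Tendsto (fun p : ℕ × ℕ => min p.1 p.2) atTop atTop := by
      apply tendsto_atTop_atTop.2
      intro b
      exact ⟨(b, b), fun p hp => le_min hp.1 hp.2⟩
    exact squeeze_zero (fun p => B.nonneg _ (hgE p.1) _ (hhP p.2))
      (fun p => hbound p.1 p.2) (hrlim.comp hmin)
  obtain ⟨x, hx, hgx, hxh⟩ := hcomp g h hgE hhP hconv
  have hgx' : Tendsto (fun κ => B.d (F^[κ] e₀) x) atTop (𝓝 0) := hgx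
  have hpic := hpc e₀ he₀ x hx.2 hgx'
  have hFxP : F x ∈ B.P := hFP x hx.2
  have hFxE : F x ∈ B.E := hFE x hx.1
  have hgFx : Tendsto (fun n => B.d (g (n+1)) (F x)) atTop (𝓝 0) := by
    have : ∀ κ, F (F^[κ] e₀) = g (κ+1) := by
      intro κ; simp only [hgdef, Function.iterate_succ_apply']
    simpa only [this] using hpic
  have hbz : Tendsto (fun n => B.d (g (n+1)) (h n)) atTop (𝓝 0) := by
    have hlim : Tendsto (fun n : ℕ => A' * r ^ n) atTop (𝓝 0) := by
      have := tendsto_pow_atTop_nhds_zero_of_lt_one hr0 hr1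
      simpa using this.const_mul A'
    exact squeeze_zero (fun n => B.nonneg _ (hgE (n+1)) _ (hhP n)) hb hlim
  have hd0 : B.d x (F x) = 0 := by
    have hub : ∀ n, B.d x (F x) ≤ B.d x (h n) + B.d (g (n+1)) (h n) + B.d (g (n+1)) (F x) :=
      fun n => B.tri x hx.1 (g (n+1)) (hgE (n+1)) (h n) (hhP n) (F x) hFxP
    have hlim : Tendsto (fun n => B.d x (h n) + B.d (g (n+1)) (h n) + B.d (g (n+1)) (F x))
        atTop (𝓝 0) := by
      have := (hxh.add hbz).add hgFx
      simpa using this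
    have h1 : B.d x (F x) ≤ 0 := ge_of_tendsto hlim (Filter.Eventually.of_forall hub)
    exact le_antisymm h1 (B.nonneg x hx.1 (F x) hFxP)
  have hFx : F x = x := ((B.eq_iff x hx (F x) ⟨hFxE, hFxP⟩).mp hd0).symm
  refine ⟨x, ⟨hx, hFx⟩, ?_⟩
  rintro y ⟨hy, hFy⟩
  have hcontr := hPC x hx.1 y hy.2
  rw [hFx, hFy] at hcontr
  have hSxy : 0 ≤ S x y := hSnn x hx.1 y hy.2
  have hS0 : S x y ≤ 0 := by nlinarith
  have hdxy : B.d x y = 0 := by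
    have h1 : Q * B.d x y ^ ϱ ≤ 0 := le_trans (hSlb x hx.1 y hy.2) hS0
    have h2 : 0 ≤ B.d x y := B.nonneg x hx.1 y hy.2
    have h3 : B.d x y ^ ϱ ≤ 0 := by
      by_contra hcon
      push_neg at hcon
      nlinarith
    have h4 : B.d x y ^ ϱ = 0 := le_antisymm h3 (pow_nonneg h2 ϱ)
    exact pow_eq_zero_iff hϱ0 |>.mp h4
  exact ((B.eq_iff x hx y hy).mp hdxy).symm
end

section
/- Let (E, P, ϑ) be a bipolar metric space and F : E ∪ P → E ∪ P a covariant map. Suppose there exist π ∈ (0,1), σ ≥ 1, and two finite sequences of positive constants q₁,…,q_σ and H₁,…,H_σ such that Σ_{υ=1}^{σ} q_υ·ϑ(Fe, Ff)^υ ≤ π·Σ_{υ=1}^{σ} q_υ·[ϑ(e, f)^υ + H_υ·ϑ(f, Fe)^υ] for all e ∈ E, f ∈ P. Then F is Picard-continuous. -/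
open Filter Topology MeasureTheory

/-- constant-coefficient almost polynomial contractions are
Picard-continuous. -/
theorem constCoeff_almostPolyContraction_picardContinuous {α : Type*}
    (B : BipolarMS α) (F : α → α) (hcov : B.Covariant F)
    (π : ℝ) (hπ : π ∈ Set.Ioo (0:ℝ) 1) (σ : ℕ) (hσ : 1 ≤ σ)
    (q H : ℕ → ℝ) (hq : ∀ υ ∈ Finset.Icc 1 σ, 0 < q υ)
    (hH : ∀ υ ∈ Finset.Icc 1 σ, 0 < H υ)
    (hAPC : ∀ e ∈ B.E, ∀ f ∈ B.P,
      ∑ υ ∈ Finset.Icc 1 σ, q υ * B.d (F e) (F f) ^ υ ≤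
        π * ∑ υ ∈ Finset.Icc 1 σ, q υ * (B.d e f ^ υ + H υ * B.d (F e) f ^ υ)) :
    B.PicardContinuous F := by
  rintro g hg h hh htend
  obtain ⟨hπ0, hπ1⟩ := hπ
  have hgE : ∀ κ, F^[κ] g ∈ B.E := by
    intro κ
    induction κ with
    | zero => simpa using hg
    | succ n ih => rw [Function.iterate_succ_apply']; exact hcov.1 _ ih
  have hFh : F h ∈ B.P := hcov.2 _ hh
  have hd : ∀ κ, 0 ≤ B.d (F (F^[κ] g)) (F h) :=
    fun κ => B.nonneg _ (hcov.1 _ (hgE κ)) _ hFh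
  have htend' : Tendsto (fun κ => B.d (F^[κ+1] g) h) atTop (𝓝 0) :=
    htend.comp (tendsto_add_atTop_nat 1)
  have h1mem : (1 : ℕ) ∈ Finset.Icc 1 σ := by simp [hσ]
  have hq1 : 0 < q 1 := hq 1 h1mem
  set R : ℕ → ℝ := fun κ => π * ∑ υ ∈ Finset.Icc 1 σ,
      q υ * (B.d (F^[κ] g) h ^ υ + H υ * B.d (F (F^[κ] g)) h ^ υ) with hR
  have hRtend : Tendsto R atTop (𝓝 0) := by
    have hterm : ∀ υ ∈ Finset.Icc 1 σ, Tendsto (fun κ =>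
        q υ * (B.d (F^[κ] g) h ^ υ + H υ * B.d (F (F^[κ] g)) h ^ υ)) atTop (𝓝 0) := by
      intro υ hυ
      have hυ1 : υ ≠ 0 := by
        have := (Finset.mem_Icc.mp hυ).1; omega
      have ha : Tendsto (fun κ => B.d (F^[κ] g) h ^ υ) atTop (𝓝 0) := by
        simpa [zero_pow hυ1] using htend.pow υ
      have hb : Tendsto (fun κ => B.d (F (F^[κ] g)) h ^ υ) atTop (𝓝 0) := by
        have := htend'.pow υ
        simpa [zero_pow hυ1, ← Function.iterate_succ_apply' F] using this
      simpa using ((ha.add (hb.const_mul (H υ))).const_mul (q υ))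
    have hsum := tendsto_finset_sum (Finset.Icc 1 σ) hterm
    simp only [Finset.sum_const_zero] at hsum
    simpa using hsum.const_mul π
  have hbound : ∀ κ, B.d (F (F^[κ] g)) (F h) ≤ (q 1)⁻¹ * R κ := by
    intro κ
    have hmain := hAPC (F^[κ] g) (hgE κ) h hh
    have hsingle : q 1 * B.d (F (F^[κ] g)) (F h) ≤
        ∑ υ ∈ Finset.Icc 1 σ, q υ * B.d (F (F^[κ] g)) (F h) ^ υ := by
      have := Finset.single_le_sum (f := fun υ => q υ * B.d (F (F^[κ] g)) (F h) ^ υ)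
        (fun i hi => mul_nonneg (hq i hi).le (pow_nonneg (hd κ) _)) h1mem
      simpa using this
    have : q 1 * B.d (F (F^[κ] g)) (F h) ≤ R κ := le_trans hsingle hmain
    rw [le_inv_mul_iff₀ hq1]
    exact this
  exact squeeze_zero hd hbound (by simpa using hRtend.const_mul (q 1)⁻¹)
end

section
/- Under the hypotheses of the covariant polynomial contraction theorem (complete bipolar metric space, continuous covariant polynomial contraction F with q_ϱ bounded below by Q_ϱ > 0 for some ϱ ≥ 1), the fixed point of F is unique: if g and g* are both fixed points of F with ϑ(g, g*) > 0, a contradiction with π ∈ (0,1) follows from the inequality Σ_{υ=0}^{σ} q_υ(g, g*)·ϑ(g, g*)^υ ≤ π·Σ_{υ=0}^{σ} q_υ(g, g*)·ϑ(g, g*)^υ together with Σ_{υ=0}^{σ} q_υ(g, g*)·ϑ(g, g*)^υ ≥ Q_ϱ·ϑ(g, g*)^ϱ > 0. -/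
open Filter Topology MeasureTheory

/-- uniqueness of the fixed point of a covariant polynomial
contraction. -/
theorem polyContraction_fixedPoint_unique {α : Type*} (B : BipolarMS α)
    (F : α → α) (hcov : B.Covariant F) (π : ℝ) (hπ : π ∈ Set.Ioo (0:ℝ) 1)
    (σ : ℕ) (hσ : 1 ≤ σ) (q : ℕ → α → α → ℝ)
    (hq : ∀ υ, ∀ e ∈ B.E, ∀ f ∈ B.P, 0 ≤ q υ e f)
    (hPC : B.IsPolyContraction F π σ q)
    (hcomp : B.IsComplete) (hcont : B.SeqContinuous F)
    (ϱ : ℕ) (hϱ1 : 1 ≤ ϱ) (hϱσ : ϱ ≤ σ) (Q : ℝ) (hQ : 0 < Q)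
    (hlb : ∀ e ∈ B.E, ∀ f ∈ B.P, Q ≤ q ϱ e f)
    (g gstar : α) (hgmem : g ∈ B.E ∩ B.P) (hgstarmem : gstar ∈ B.E ∩ B.P)
    (hg : F g = g) (hgstar : F gstar = gstar) :
    g = gstar := by
  obtain ⟨hgE, hgP⟩ := hgmem
  obtain ⟨hsE, hsP⟩ := hgstarmem
  set S : ℝ := ∑ υ ∈ Finset.range (σ + 1), q υ g gstar * B.d g gstar ^ υ with hS
  have hd0 : 0 ≤ B.d g gstar := B.nonneg g hgE gstar hsP
  have hcontr := hPC g hgE gstar hsP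
  rw [hg, hgstar] at hcontr
  have hS0 : S ≤ 0 := by nlinarith [hπ.1, hπ.2]
  have hSge : Q * B.d g gstar ^ ϱ ≤ S := by
    have hmem : ϱ ∈ Finset.range (σ + 1) := Finset.mem_range.mpr (by omega)
    calc Q * B.d g gstar ^ ϱ ≤ q ϱ g gstar * B.d g gstar ^ ϱ := by
          have := hlb g hgE gstar hsP
          nlinarith [pow_nonneg hd0 ϱ]
      _ ≤ S := Finset.single_le_sum (f := fun υ => q υ g gstar * B.d g gstar ^ υ)
          (fun i _ => mul_nonneg (hq i g hgE gstar hsP) (pow_nonneg hd0 i)) hmem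
  have hdpow : B.d g gstar ^ ϱ = 0 := by nlinarith [pow_nonneg hd0 ϱ]
  have hd : B.d g gstar = 0 := by
    exact pow_eq_zero_iff (by omega) |>.mp hdpow
  exact (B.eq_iff g ⟨hgE, hgP⟩ gstar ⟨hsE, hsP⟩).mp hd
end
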